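/- Let D ≥ 1, let E : Fin D → ℝ be a family of real numbers (energy eigenvalues) satisfying the k-th no-resonance condition, and let c : Fin D → ℂ. Define the time-evolved components ψ_j(t) = c_j · exp(−i·E_j·t). Then for every pair of tuples α, β : Fin k → Fin D, the limit lim_{T→∞} (1/T) ∫₀^T ∏_{j} ψ_{α_j}(t) · conj(ψ_{β_j}(t)) dt exists, and it equals ∏_j |c_{α_j}|² if β is a rearrangement of α (i.e., there exists a permutation σ of Fin k with β = α ∘ σ), and equals 0 otherwise. -/

import Mathlib

open Filter MeasureTheory

def NoResonance (D k : ℕ) (E : Fin D → ℝ) : Prop :=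
  ∀ α β : Fin k → Fin D, (∑ j, E (α j)) = (∑ j, E (β j)) →
    ∃ σ : Equiv.Perm (Fin k), β = α ∘ σ

theorem temporal_ensemble_eq_random_phase_ensemble
    (D k : ℕ) (hD : 1 ≤ D) (E : Fin D → ℝ) (hNR : NoResonance D k E)
    (c : Fin D → ℂ) (ψ : Fin D → ℝ → ℂ)
    (hψ : ∀ j t, ψ j t = c j * Complex.exp (-(Complex.I * (E j : ℂ) * (t : ℂ))))
    (α β : Fin k → Fin D) :
    Tendsto
      (fun T : ℝ => (1 / T : ℂ) *
        ∫ t in (0:ℝ)..T, ∏ j, ψ (α j) t * (starRingEnd ℂ) (ψ (β j) t))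
      atTop
      (nhds (if ∃ σ : Equiv.Perm (Fin k), β = α ∘ σ
              then ∏ j, (Complex.normSq (c (α j)) : ℂ) else 0)) := by
  set ω : ℝ := (∑ j, E (α j)) - ∑ j, E (β j) with hωdef
  set A : ℂ := ∏ j, c (α j) * (starRingEnd ℂ) (c (β j)) with hAdef
  have hint : ∀ t : ℝ, (∏ j, ψ (α j) t * (starRingEnd ℂ) (ψ (β j) t))
      = A * Complex.exp ((-(Complex.I * ω)) * t) := by
    intro t
    have h1 : ∀ j : Fin k, ψ (α j) t * (starRingEnd ℂ) (ψ (β j) t)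
        = (c (α j) * (starRingEnd ℂ) (c (β j))) *
          Complex.exp (-(Complex.I * (E (α j) : ℂ) * t) + Complex.I * (E (β j) : ℂ) * t) := by
      intro j
      rw [hψ, hψ, map_mul, ← Complex.exp_conj, Complex.exp_add]
      have : (starRingEnd ℂ) (-(Complex.I * (E (β j) : ℂ) * t)) = Complex.I * (E (β j) : ℂ) * t := by
        simp [map_mul, Complex.conj_I]
      rw [this]; ring
    rw [Finset.prod_congr rfl (fun j _ => h1 j), Finset.prod_mul_distrib, ← Complex.exp_sum, ← hAdef]
    have hsum : (∑ x : Fin k, (-(Complex.I * (E (α x) : ℂ) * t) + Complex.I * (E (β x) : ℂ) * t))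
        = (Complex.I * (t : ℂ)) * ((∑ x : Fin k, (E (β x) : ℂ)) - ∑ x : Fin k, (E (α x) : ℂ)) := by
      rw [← Finset.sum_sub_distrib, Finset.mul_sum]
      exact Finset.sum_congr rfl fun x _ => by ring
    rw [hsum]
    congr 1
    push_cast [hωdef]
    ring
  by_cases h : ∃ σ : Equiv.Perm (Fin k), β = α ∘ σ
  · rw [if_pos h]
    obtain ⟨σ, hσ⟩ := h
    have hω0 : ω = 0 := by
      rw [hωdef, sub_eq_zero, hσ]
      exact (Equiv.sum_comp σ (fun j => E (α j))).symm
    have hA2 : A = ∏ j, (Complex.normSq (c (α j)) : ℂ) := by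
      rw [hAdef, Finset.prod_mul_distrib, hσ]
      have : (∏ j, (starRingEnd ℂ) (c ((α ∘ σ) j))) = ∏ j, (starRingEnd ℂ) (c (α j)) :=
        Equiv.prod_comp σ (fun j => (starRingEnd ℂ) (c (α j)))
      rw [this, ← Finset.prod_mul_distrib]
      simp [Complex.mul_conj]
    rw [← hA2]
    apply Tendsto.congr' (f₁ := fun _ => A)
    · filter_upwards [eventually_gt_atTop (0:ℝ)] with T hT
      have hT' : (T : ℂ) ≠ 0 := by exact_mod_cast hT.ne'
      simp only [hint, hω0]
      simp only [Complex.ofReal_zero, mul_zero, zero_mul, neg_zero, Complex.exp_zero, mul_one]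
      rw [intervalIntegral.integral_const]
      simp [Complex.real_smul]
      field_simp
    · exact tendsto_const_nhds
  · rw [if_neg h]
    have hω0 : ω ≠ 0 := by
      intro h0
      exact h (hNR α β (sub_eq_zero.mp h0))
    have hc0 : (-(Complex.I * ω) : ℂ) ≠ 0 := by
      simp [Complex.ext_iff, hω0, Complex.I_ne_zero]
    have key : ∀ T : ℝ, ((1 / T : ℂ) *
        ∫ t in (0:ℝ)..T, ∏ j, ψ (α j) t * (starRingEnd ℂ) (ψ (β j) t))
        = (1 / T : ℂ) * (A * ((Complex.exp ((-(Complex.I * ω)) * T) - 1) / (-(Complex.I * ω)))) := by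
      intro T
      congr 1
      rw [intervalIntegral.integral_congr (g := fun t => A * Complex.exp ((-(Complex.I * ω)) * t))
        (fun t _ => hint t)]
      rw [intervalIntegral.integral_const_mul, integral_exp_mul_complex hc0]
      simp
    simp only [key]
    apply squeeze_zero_norm' (a := fun T : ℝ => (‖A‖ * (2 / ‖(-(Complex.I * ω) : ℂ)‖)) * T⁻¹)
    · filter_upwards [eventually_gt_atTop (0:ℝ)] with T hT
      have he : ‖Complex.exp ((-(Complex.I * ω)) * T) - 1‖ ≤ 2 := by
        calc ‖Complex.exp ((-(Complex.I * ω)) * T) - 1‖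
            ≤ ‖Complex.exp ((-(Complex.I * ω)) * T)‖ + ‖(1:ℂ)‖ := norm_sub_le _ _
          _ = 2 := by
              rw [Complex.norm_exp]
              have : ((-(Complex.I * ω)) * T).re = 0 := by simp
              rw [this]; norm_num
      calc ‖(1 / (T:ℂ)) * (A * ((Complex.exp ((-(Complex.I * ω)) * T) - 1) / (-(Complex.I * ω))))‖
          = (‖A‖ * (‖Complex.exp ((-(Complex.I * ω)) * T) - 1‖ / ‖(-(Complex.I * ω) : ℂ)‖)) * T⁻¹ := by
            simp only [norm_mul, norm_div, norm_one, Complex.norm_real, Real.norm_eq_abs,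
              abs_of_pos hT]
            ring
        _ ≤ (‖A‖ * (2 / ‖(-(Complex.I * ω) : ℂ)‖)) * T⁻¹ := by gcongr
    · rw [show (0:ℝ) = (‖A‖ * (2 / ‖(-(Complex.I * ω) : ℂ)‖)) * 0 by ring]
      exact tendsto_inv_atTop_zero.const_mul _
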